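/- Let H ≥ 1 be an integer, e_1 = H, and e_{i+1} = ⌊(1 + 1/H) e_i⌋ for i ≥ 1. For any J ≥ 1, letting w = Σ_{j=1}^{J} e_j, one has Σ_{j=1}^{J} √(e_j) ≤ 10 √(wH). -/

import Mathlib

/-- Summation estimate for the stage lengths `e_1 = H`,
`e_{i+1} = ⌊(1+1/H) e_i⌋`: the sum of square roots of the stage lengths is at
most `10 √(wH)`, where `w` is the sum of the stage lengths. -/
theorem sqrt_stage_sum_bound
    (H : ℕ) (hH : 1 ≤ H) (e : ℕ → ℕ)
    (he1 : e 1 = H)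
    (herec : ∀ i, 1 ≤ i → e (i + 1) = ⌊(1 + 1 / (H : ℝ)) * (e i : ℝ)⌋₊)
    (J : ℕ) (hJ : 1 ≤ J) (w : ℝ)
    (hw : w = ∑ j ∈ Finset.Icc 1 J, (e j : ℝ)) :
    ∑ j ∈ Finset.Icc 1 J, Real.sqrt (e j) ≤ 10 * Real.sqrt (w * H) := by
  have hH0 : 0 < H := hH
  have hHR : (1 : ℝ) ≤ H := by exact_mod_cast hH
  -- recurrence in ℕ
  have hE : ∀ i, 1 ≤ i → e (i + 1) = e i + e i / H := by
    intro i hi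
    rw [herec i hi]
    have h1 : (1 + 1 / (H : ℝ)) * (e i : ℝ) = (e i : ℝ) / (H : ℝ) + (e i : ℕ) := by
      field_simp; ring
    rw [h1, Nat.floor_add_natCast (by positivity), Nat.floor_div_natCast, Nat.floor_natCast]
    exact Nat.add_comm _ _
  -- lower bound H ≤ e i
  have hge : ∀ i, 1 ≤ i → H ≤ e i := by
    intro i hi
    induction i, hi using Nat.le_induction with
    | base => exact he1 ▸ le_rfl
    | succ n hn ih => rw [hE n hn]; exact le_trans ih (Nat.le_add_right _ _)
  -- monotonicity
  have hmono : ∀ i, 1 ≤ i → e i ≤ e (i + 1) := by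
    intro i hi; rw [hE i hi]; exact Nat.le_add_right _ _
  -- key sum bound: S_J + H^2 ≤ 3 H e_J
  have hL : ∀ K, 1 ≤ K →
      (∑ j ∈ Finset.Icc 1 K, (e j : ℝ)) + (H : ℝ) * H ≤ 3 * H * e K := by
    intro K hK
    induction K, hK using Nat.le_induction with
    | base =>
      rw [Finset.Icc_self, Finset.sum_singleton, he1]
      nlinarith
    | succ n hn ih =>
      rw [Finset.sum_Icc_succ_top (by omega : 1 ≤ n + 1)]
      set d : ℕ := e n / H with hd
      have hd1 : 1 ≤ d := (Nat.one_le_div_iff hH0).mpr (hge n hn)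
      have hdm : H * d + e n % H = e n := Nat.div_add_mod (e n) H
      have hr : e n % H < H := Nat.mod_lt _ hH0
      have hrec : (e (n + 1) : ℝ) = (e n : ℝ) + d := by
        rw [hE n hn]; push_cast; ring
      have hdR : (1 : ℝ) ≤ (d : ℝ) := by exact_mod_cast hd1
      have hen : (e n : ℝ) = (H : ℝ) * d + (e n % H : ℕ) := by exact_mod_cast hdm.symm
      have hrR : ((e n % H : ℕ) : ℝ) + 1 ≤ (H : ℝ) := by exact_mod_cast hr
      have h5 : (H : ℝ) * 1 ≤ (H : ℝ) * d :=
        mul_le_mul_of_nonneg_left hdR (by positivity)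
      have h6 : (1 : ℝ) * d ≤ (H : ℝ) * d :=
        mul_le_mul_of_nonneg_right hHR (by positivity)
      rw [hrec]
      nlinarith [ih]
  -- main induction
  have main : ∀ K, 1 ≤ K →
      (∑ j ∈ Finset.Icc 1 K, Real.sqrt (e j)) ≤
        10 * Real.sqrt ((∑ j ∈ Finset.Icc 1 K, (e j : ℝ)) * H) := by
    intro K hK
    induction K, hK using Nat.le_induction with
    | base =>
      simp only [Finset.Icc_self, Finset.sum_singleton, he1]
      have h1 : Real.sqrt ((H : ℝ) * H) = H := Real.sqrt_mul_self (by positivity)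
      have h2 : Real.sqrt (H : ℝ) ≤ Real.sqrt ((H : ℝ) * H) :=
        Real.sqrt_le_sqrt (by nlinarith)
      linarith
    | succ n hn ih =>
      rw [Finset.sum_Icc_succ_top (by omega : 1 ≤ n + 1),
        Finset.sum_Icc_succ_top (by omega : 1 ≤ n + 1)]
      set S : ℝ := ∑ j ∈ Finset.Icc 1 n, (e j : ℝ) with hSdef
      set a : ℝ := (e (n + 1) : ℝ) with hadef
      have hS0 : 0 ≤ S := Finset.sum_nonneg fun i _ => by positivity
      have haH : (H : ℝ) ≤ a := by rw [hadef]; exact_mod_cast hge (n + 1) (by omega)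
      have ha1 : (1 : ℝ) ≤ a := le_trans hHR haH
      have hSa : S ≤ 3 * H * a := by
        have h1 := hL n hn
        have h2 : (e n : ℝ) ≤ a := by rw [hadef]; exact_mod_cast hmono n hn
        nlinarith
      set u : ℝ := Real.sqrt (S * H) with hu
      set v : ℝ := Real.sqrt a with hv
      have hu0 : 0 ≤ u := Real.sqrt_nonneg _
      have hv0 : 0 ≤ v := Real.sqrt_nonneg _
      have hu2 : u ^ 2 = S * H := Real.sq_sqrt (by positivity)
      have hv2 : v ^ 2 = a := Real.sq_sqrt (by linarith)
      have hHa : (0 : ℝ) < H * a := by nlinarith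
      have huv : u * v ≤ 2 * (H * a) := by
        have h1 : (u * v) ^ 2 ≤ 3 * (H * a) ^ 2 := by
          have : (u * v) ^ 2 = S * H * a := by rw [mul_pow, hu2, hv2]
          nlinarith
        nlinarith [mul_nonneg hu0 hv0]
      have hsq : (10 * u + v) ^ 2 ≤ 100 * ((S + a) * H) := by nlinarith
      have hfin : 10 * u + v ≤ 10 * Real.sqrt ((S + a) * H) := by
        have h1 : 10 * u + v = Real.sqrt ((10 * u + v) ^ 2) :=
          (Real.sqrt_sq (by positivity)).symm
        rw [h1]
        have h2 : Real.sqrt ((10 * u + v) ^ 2) ≤ Real.sqrt (100 * ((S + a) * H)) :=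
          Real.sqrt_le_sqrt hsq
        have h3 : Real.sqrt (100 * ((S + a) * H)) = 10 * Real.sqrt ((S + a) * H) := by
          rw [show (100 : ℝ) = 10 ^ 2 by norm_num, Real.sqrt_mul (by positivity),
            Real.sqrt_sq (by norm_num)]
        linarith
      calc (∑ j ∈ Finset.Icc 1 n, Real.sqrt (e j)) + Real.sqrt a
          ≤ 10 * u + v := by rw [hu, hv]; exact add_le_add ih le_rfl
        _ ≤ 10 * Real.sqrt ((S + a) * H) := hfin
  rw [hw]
  exact main J hJ
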